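/- The polytope P_x defined by equations (a)–(g) equals the convex hull of the points (e_d, ν) where e_d is the d-th standard basis vector of ℝ^{D+1}, and ν ∈ K_d, with K_0 = Z = {z : Σz_j = 1, 0 ≤ z_j ≤ 1/N} and K_d = {ν : Σν_j = 1, 0 ≤ ν_j ≤ 1/d on F, ν_j = 0 off F} for 1 ≤ d ≤ D. -/

import Mathlib

theorem stmt_11 (n N D : ℕ) (hn : 1 ≤ n) (hN : 1 ≤ N) (hNn : N ≤ n)
    (F : Finset (Fin n)) (hD : D = F.card) (hD1 : 1 ≤ D)
    (P : Set ((Fin (D + 1) → ℝ) × (Fin n → ℝ)))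
    (hP : P = {p : (Fin (D + 1) → ℝ) × (Fin n → ℝ) |
      ∃ w : Fin (D + 1) → Fin n → ℝ,
        (∑ d, p.1 d) = 1 ∧
        (∀ d, 0 ≤ p.1 d) ∧
        (∀ j, p.2 j = ∑ d, w d j) ∧
        (∀ d, (∑ j, w d j) = p.1 d) ∧
        (∀ j, 0 ≤ w 0 j ∧ w 0 j ≤ p.1 0 / N) ∧
        (∀ d : Fin (D + 1), 1 ≤ (d : ℕ) → ∀ j ∉ F, w d j = 0) ∧
        (∀ d : Fin (D + 1), 1 ≤ (d : ℕ) → ∀ j ∈ F,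
          0 ≤ w d j ∧ w d j ≤ p.1 d / ((d : ℕ) : ℝ))})
    (K : Fin (D + 1) → Set (Fin n → ℝ))
    (hK0 : K 0 = {z : Fin n → ℝ | (∑ j, z j) = 1 ∧ ∀ j, 0 ≤ z j ∧ z j ≤ 1 / N})
    (hKd : ∀ d : Fin (D + 1), 1 ≤ (d : ℕ) →
      K d = {ν : Fin n → ℝ | (∑ j, ν j) = 1 ∧
        (∀ j ∈ F, 0 ≤ ν j ∧ ν j ≤ 1 / ((d : ℕ) : ℝ)) ∧ (∀ j ∉ F, ν j = 0)}) :
    P = convexHull ℝ (⋃ d : Fin (D + 1),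
      ({fun d' => if d' = d then (1 : ℝ) else 0} : Set (Fin (D + 1) → ℝ)) ×ˢ K d) := by
  have hNpos : (0:ℝ) < (N:ℝ) := by exact_mod_cast hN
  apply Set.Subset.antisymm
  · -- P ⊆ convexHull
    rintro ⟨σ, ν⟩ hp
    rw [hP] at hp
    obtain ⟨w, h1, h2, h3, h4, h5, h6, h7⟩ := hp
    simp only at h1 h2 h3 h4 h5 h6 h7
    -- if σ d = 0 then w d = 0
    have hw0 : ∀ d, σ d = 0 → ∀ j, w d j = 0 := by
      intro d hd j
      by_cases h0 : (d : ℕ) = 0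
      · have hd0 : d = 0 := Fin.ext h0
        subst hd0
        have := h5 j
        have hub : w 0 j ≤ 0 := by
          have := this.2; rw [hd] at this; simpa using this
        linarith [this.1]
      · have h1d : 1 ≤ (d : ℕ) := Nat.one_le_iff_ne_zero.mpr h0
        by_cases hj : j ∈ F
        · have := h7 d h1d j hj
          have hub : w d j ≤ 0 := by
            have := this.2; rw [hd] at this; simpa using this
          linarith [this.1]
        · exact h6 d h1d j hj
    set t : Finset (Fin (D + 1)) := Finset.univ.filter (fun d => σ d ≠ 0) with ht
    have hsum : ∑ d ∈ t, σ d = 1 := by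
      rw [ht, Finset.sum_filter_ne_zero]; exact h1
    set z : Fin (D + 1) → (Fin (D + 1) → ℝ) × (Fin n → ℝ) :=
      fun d => (fun d' => if d' = d then (1 : ℝ) else 0, (σ d)⁻¹ • w d) with hz
    have key : (σ, ν) = t.centerMass σ z := by
      rw [Finset.centerMass, hsum, inv_one, one_smul]
      have hfst : (∑ d ∈ t, σ d • z d).1 = σ := by
        funext d'
        rw [Prod.fst_sum, Finset.sum_apply]
        simp only [hz, Prod.smul_fst, Pi.smul_apply, smul_eq_mul, mul_ite, mul_one, mul_zero]
        rw [Finset.sum_ite_eq]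
        split
        · rfl
        · rename_i hmem
          rw [ht] at hmem
          simp only [Finset.mem_filter, Finset.mem_univ, true_and, not_not] at hmem
          exact hmem.symm
      have hsnd : (∑ d ∈ t, σ d • z d).2 = ν := by
        funext j
        rw [Prod.snd_sum, Finset.sum_apply]
        simp only [hz, Prod.smul_snd, Pi.smul_apply, smul_eq_mul]
        have : ∀ d ∈ t, σ d * ((σ d)⁻¹ * w d j) = w d j := by
          intro d hd
          rw [ht] at hd
          simp only [Finset.mem_filter, Finset.mem_univ, true_and] at hd
          field_simp
        rw [Finset.sum_congr rfl this, ht,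
          Finset.sum_filter_of_ne (by intro x _ hx; exact fun h0 => hx (hw0 x h0 j))]
        exact (h3 j).symm
      rw [Prod.ext_iff]; exact ⟨hfst.symm, hsnd.symm⟩
    rw [key]
    apply Finset.centerMass_mem_convexHull
    · intro d _; exact h2 d
    · rw [hsum]; norm_num
    · intro d hd
      rw [ht] at hd
      simp only [Finset.mem_filter, Finset.mem_univ, true_and] at hd
      have hσpos : 0 < σ d := lt_of_le_of_ne (h2 d) (Ne.symm hd)
      rw [Set.mem_iUnion]
      refine ⟨d, Set.mem_prod.mpr ⟨rfl, ?_⟩⟩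
      by_cases h0 : (d : ℕ) = 0
      · have hd0 : d = 0 := Fin.ext h0
        subst hd0
        rw [hK0]
        refine ⟨?_, ?_⟩
        · simp only [hz, Pi.smul_apply, smul_eq_mul]
          rw [← Finset.mul_sum, h4]
          field_simp
        · intro j
          simp only [hz, Pi.smul_apply, smul_eq_mul]
          constructor
          · have := (h5 j).1; positivity
          · have hub := (h5 j).2
            calc (σ 0)⁻¹ * w 0 j ≤ (σ 0)⁻¹ * (σ 0 / N) :=
                  mul_le_mul_of_nonneg_left hub (by positivity)
              _ = 1 / N := by field_simp
      · have h1d : 1 ≤ (d : ℕ) := Nat.one_le_iff_ne_zero.mpr h0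
        have hdpos : (0:ℝ) < ((d : ℕ) : ℝ) := by exact_mod_cast h1d
        rw [hKd d h1d]
        refine ⟨?_, ?_, ?_⟩
        · simp only [hz, Pi.smul_apply, smul_eq_mul]
          rw [← Finset.mul_sum, h4]
          field_simp
        · intro j hj
          simp only [hz, Pi.smul_apply, smul_eq_mul]
          constructor
          · have := (h7 d h1d j hj).1; positivity
          · have hub := (h7 d h1d j hj).2
            calc (σ d)⁻¹ * w d j ≤ (σ d)⁻¹ * (σ d / ((d:ℕ):ℝ)) :=
                  mul_le_mul_of_nonneg_left hub (by positivity)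
              _ = 1 / ((d:ℕ):ℝ) := by field_simp
        · intro j hj
          simp only [hz, Pi.smul_apply, smul_eq_mul, h6 d h1d j hj, mul_zero]
  · -- convexHull ⊆ P
    apply convexHull_min
    · rintro ⟨σ, ν⟩ hp
      simp only [Set.mem_iUnion, Set.mem_prod, Set.mem_singleton_iff] at hp
      obtain ⟨d, hσ, hν⟩ := hp
      rw [hP]
      refine ⟨fun d' j => if d' = d then ν j else 0, ?_, ?_, ?_, ?_, ?_, ?_, ?_⟩
      · simp [hσ]
      · intro d'; simp only [hσ]; split <;> norm_num
      · intro j; simp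
      · intro d'; simp only [hσ]
        split <;> simp_all
        · by_cases h0 : (d : ℕ) = 0
          · have : d = 0 := Fin.ext h0
            subst this; rw [hK0] at hν; exact hν.1
          · rw [hKd d (Nat.one_le_iff_ne_zero.mpr h0)] at hν; exact hν.1
      · intro j
        simp only [hσ]
        by_cases hd0 : (0 : Fin (D+1)) = d
        · simp only [hd0, if_pos rfl]
          rw [← hd0, hK0] at hν
          exact ⟨(hν.2 j).1, (hν.2 j).2⟩
        · simp only [if_neg hd0]
          exact ⟨le_refl _, by positivity⟩
      · intro d' hd' j hj
        dsimp only
        split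
        · rename_i h; subst h
          rw [hKd d' hd'] at hν
          exact hν.2.2 j hj
        · rfl
      · intro d' hd' j hj
        simp only [hσ]
        split
        · rename_i h; subst h
          rw [hKd d' hd'] at hν
          have := hν.2.1 j hj
          simpa using this
        · exact ⟨le_refl _, by positivity⟩
    · -- convexity of P
      rw [hP]
      rintro ⟨σ, ν⟩ ⟨w, h1, h2, h3, h4, h5, h6, h7⟩ ⟨σ', ν'⟩ ⟨w', g1, g2, g3, g4, g5, g6, g7⟩ a b ha hb hab
      simp only at h1 h2 h3 h4 h5 h6 h7 g1 g2 g3 g4 g5 g6 g7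
      refine ⟨fun d j => a * w d j + b * w' d j, ?_, ?_, ?_, ?_, ?_, ?_, ?_⟩
      · simp only [Prod.fst_add, Prod.smul_fst, Pi.add_apply, Pi.smul_apply, smul_eq_mul,
          Finset.sum_add_distrib, ← Finset.mul_sum, h1, g1]
        linarith
      · intro d
        simp only [Prod.fst_add, Prod.smul_fst, Pi.add_apply, Pi.smul_apply, smul_eq_mul]
        have := h2 d; have := g2 d; positivity
      · intro j
        simp only [Prod.snd_add, Prod.smul_snd, Pi.add_apply, Pi.smul_apply, smul_eq_mul,
          Finset.sum_add_distrib, ← Finset.mul_sum]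
        rw [h3 j, g3 j]
      · intro d
        simp only [Prod.fst_add, Prod.smul_fst, Pi.add_apply, Pi.smul_apply, smul_eq_mul,
          Finset.sum_add_distrib, ← Finset.mul_sum, h4 d, g4 d]
      · intro j
        simp only [Prod.fst_add, Prod.smul_fst, Pi.add_apply, Pi.smul_apply, smul_eq_mul]
        constructor
        · have := (h5 j).1; have := (g5 j).1; positivity
        · have hh := (h5 j).2; have gg := (g5 j).2
          rw [add_div]
          have : a * (σ 0 / N) + b * (σ' 0 / N) = a * σ 0 / N + b * σ' 0 / N := by ring
          nlinarith [mul_le_mul_of_nonneg_left hh ha, mul_le_mul_of_nonneg_left gg hb]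
      · intro d hd j hj
        simp only [Prod.fst_add, Prod.smul_fst, Prod.snd_add, Pi.add_apply, Pi.smul_apply,
          smul_eq_mul]
        rw [h6 d hd j hj, g6 d hd j hj]; ring
      · intro d hd j hj
        simp only [Prod.fst_add, Prod.smul_fst, Pi.add_apply, Pi.smul_apply, smul_eq_mul]
        constructor
        · have := (h7 d hd j hj).1; have := (g7 d hd j hj).1; positivity
        · have hh := (h7 d hd j hj).2; have gg := (g7 d hd j hj).2
          rw [add_div, mul_div_assoc, mul_div_assoc]
          have := mul_le_mul_of_nonneg_left hh ha
          have := mul_le_mul_of_nonneg_left gg hb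
          linarith
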